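/- For every real number a ≥ 0, there exists a continuous map H : C(𝕀) × [0,1] → C(𝕀) (a homotopy), written H_t(f) = H(f,t), such that: (1) H_0(f) = f for every f ∈ C(𝕀); (2) h_top(H_t(f)) ≥ a for every t ∈ (0,1] and every f ∈ C(𝕀); (3) H_1 is a constant map, i.e., H_1(f) = H_1(g) for all f, g ∈ C(𝕀). -/

import Mathlib

open unitInterval

/-- The topological entropy of a continuous self-map of the unit interval. -/
noncomputable def htop (f : C(I, I)) : EReal :=
  Dynamics.coverEntropy ⇑f Set.univ


open unitInterval Set Filter
open Set Dynamics Filter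
open scoped ENNReal Uniformity

variable {X : Type*} [MetricSpace X]

omit [MetricSpace X] in
lemma itinerary (T : X → X) {N : ℕ} (J : Fin N → Set X)
    (hne : ∀ i, (J i).Nonempty) (himg : ∀ i j, J j ⊆ T '' (J i)) :
    ∀ (n : ℕ) (w : ℕ → Fin N), ∃ x, x ∈ J (w 0) ∧ ∀ k < n, T^[k] x ∈ J (w k) := by
  intro n
  induction n with
  | zero => intro w; obtain ⟨x, hx⟩ := hne (w 0); exact ⟨x, hx, fun k hk => absurd hk (by omega)⟩
  | succ n ih =>
    intro w
    obtain ⟨y, hy0, hy⟩ := ih (fun k => w (k + 1))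
    obtain ⟨x, hx, hTx⟩ := himg (w 0) (w 1) hy0
    refine ⟨x, hx, fun k hk => ?_⟩
    cases k with
    | zero => simpa using hx
    | succ k =>
      rw [Function.iterate_succ_apply, hTx]
      exact hy k (by omega)

/-- Horseshoe gives a large dynamical net at every time `n`. -/
lemma horseshoe_net (T : X → X) {N : ℕ} (hN : 0 < N) (J : Fin N → Set X)
    {ε : ℝ} (hε : 0 < ε)
    (hsep : ∀ i j, i ≠ j → ∀ x ∈ J i, ∀ y ∈ J j, ε ≤ dist x y)
    (hne : ∀ i, (J i).Nonempty) (himg : ∀ i j, J j ⊆ T '' (J i)) (n : ℕ) :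
    (N ^ n : ℕ∞) ≤ netMaxcard T Set.univ {p : X × X | dist p.1 p.2 < ε / 2} n := by
  classical
  haveI : Inhabited (Fin N) := ⟨⟨0, hN⟩⟩
  set U : Set (X × X) := {p : X × X | dist p.1 p.2 < ε / 2} with hU
  -- choose itinerary points
  have key : ∀ v : Fin n → Fin N, ∃ x, ∀ k : Fin n, T^[(k : ℕ)] x ∈ J (v k) := by
    intro v
    obtain ⟨x, -, hx⟩ := itinerary T J hne himg n (fun k => if h : k < n then v ⟨k, h⟩ else default)
    refine ⟨x, fun k => ?_⟩
    have := hx k k.isLt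
    simpa [k.isLt] using this
  choose xf hxf using key
  -- injectivity
  have hinj : Function.Injective xf := by
    intro v w hvw
    by_contra hne'
    obtain ⟨k, hk⟩ := Function.ne_iff.1 hne'
    have h1 := hxf v k
    have h2 := hxf w k
    rw [hvw] at h1
    have := hsep (v k) (w k) hk _ h1 _ h2
    rw [dist_self] at this; linarith
  set s : Finset X := Finset.image xf Finset.univ with hs
  have hcard : s.card = N ^ n := by
    rw [hs, Finset.card_image_of_injective _ hinj, Finset.card_univ]
    simp [Fintype.card_fun]
  have hnet : IsDynNetIn T Set.univ U n (s : Set X) := by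
    constructor
    · exact subset_univ _
    · intro x hx y hy hxy
      simp only [hs, Finset.coe_image, Finset.coe_univ, image_univ, mem_range] at hx hy
      obtain ⟨v, rfl⟩ := hx
      obtain ⟨w, rfl⟩ := hy
      have hvw : v ≠ w := fun h => hxy (by rw [h])
      obtain ⟨k, hk⟩ := Function.ne_iff.1 hvw
      refine Set.disjoint_left.2 fun z hz1 hz2 => ?_
      rw [mem_ball_dynEntourage] at hz1 hz2
      have e1 := hz1 k k.isLt
      have e2 := hz2 k k.isLt
      simp only [UniformSpace.ball, mem_preimage, hU, mem_setOf_eq] at e1 e2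
      have hd := hsep (v k) (w k) hk _ (hxf v k) _ (hxf w k)
      have : dist (T^[(k:ℕ)] (xf v)) (T^[(k:ℕ)] (xf w)) < ε := by
        calc dist (T^[(k:ℕ)] (xf v)) (T^[(k:ℕ)] (xf w))
            ≤ dist (T^[(k:ℕ)] (xf v)) (T^[(k:ℕ)] z) + dist (T^[(k:ℕ)] z) (T^[(k:ℕ)] (xf w)) :=
              dist_triangle _ _ _
          _ < ε / 2 + ε / 2 := add_lt_add e1 (by rw [dist_comm]; exact e2)
          _ = ε := by ring
      linarith
  calc (N ^ n : ℕ∞) = (s.card : ℕ∞) := by rw [hcard]; push_cast; rfl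
    _ ≤ _ := hnet.card_le_netMaxcard

/-- A horseshoe with `N` branches forces topological entropy at least `log N`. -/
lemma horseshoe_coverEntropy (T : X → X) {N : ℕ} (hN : 0 < N) (J : Fin N → Set X)
    {ε : ℝ} (hε : 0 < ε)
    (hsep : ∀ i j, i ≠ j → ∀ x ∈ J i, ∀ y ∈ J j, ε ≤ dist x y)
    (hne : ∀ i, (J i).Nonempty) (himg : ∀ i j, J j ⊆ T '' (J i)) :
    (Real.log N : EReal) ≤ coverEntropy T Set.univ := by
  set U : Set (X × X) := {p : X × X | dist p.1 p.2 < ε / 2} with hU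
  have hUuni : U ∈ 𝓤 X := Metric.dist_mem_uniformity (by linarith)
  refine le_trans ?_ (netEntropyEntourage_le_coverEntropy T Set.univ hUuni)
  rw [netEntropyEntourage]
  apply Filter.le_limsup_of_frequently_le'
  rw [Filter.frequently_atTop]
  intro n₀
  refine ⟨max n₀ 1, le_max_left _ _, ?_⟩
  set n := max n₀ 1
  have hn : 0 < n := lt_of_lt_of_le one_pos (le_max_right _ _)
  have hcard := horseshoe_net T hN J hε hsep hne himg n
  have hlog : ((n : ℕ) : EReal) * (Real.log N : EReal)
      ≤ ENNReal.log (netMaxcard T Set.univ U n) := by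
    have h1 : ENNReal.log ((N : ℝ≥0∞) ^ n) ≤ ENNReal.log (netMaxcard T Set.univ U n) := by
      apply ENNReal.log_monotone
      have : (((N ^ n : ℕ∞)) : ℝ≥0∞) ≤ ((netMaxcard T Set.univ U n : ℕ∞) : ℝ≥0∞) :=
        ENat.toENNReal_mono hcard
      calc (N : ℝ≥0∞) ^ n = (((N ^ n : ℕ∞)) : ℝ≥0∞) := by push_cast; ring
        _ ≤ _ := this
    rw [ENNReal.log_pow] at h1
    refine le_trans (le_of_eq ?_) h1
    congr 1
    have hN' : (0:ℝ) < (N:ℝ) := by exact_mod_cast hN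
    rw [show ((N : ℝ≥0∞)) = ENNReal.ofReal (N:ℝ) by simp [ENNReal.ofReal_natCast],
      ENNReal.log_ofReal_of_pos hN']
  rw [EReal.le_div_iff_mul_le (by exact_mod_cast hn) (EReal.natCast_ne_top n)]
  rw [mul_comm] at hlog
  exact hlog


noncomputable section

namespace EntropyHomotopy

/-- Extension of `f : C(I,I)` to a function `ℝ → ℝ`. -/
def tld (f : C(I, I)) : ℝ → ℝ := fun u => (f (Set.projIcc 0 1 zero_le_one u) : ℝ)

lemma tld_mem (f : C(I, I)) (u : ℝ) : tld f u ∈ Set.Icc (0:ℝ) 1 := (f _).2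

lemma tld_nonneg (f : C(I, I)) (u : ℝ) : 0 ≤ tld f u := (tld_mem f u).1

lemma tld_le_one (f : C(I, I)) (u : ℝ) : tld f u ≤ 1 := (tld_mem f u).2

lemma tld_continuous (f : C(I, I)) : Continuous (tld f) :=
  continuous_subtype_val.comp (f.continuous.comp continuous_projIcc)

lemma tld_uniformContinuous (f : C(I, I)) : UniformContinuous (tld f) := by
  have h1 : UniformContinuous f := CompactSpace.uniformContinuous_of_continuous f.continuous
  have h2 : UniformContinuous (Set.projIcc (0:ℝ) 1 zero_le_one) :=
    (LipschitzWith.projIcc zero_le_one).uniformContinuous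
  exact uniformContinuous_subtype_val.comp (h1.comp h2)

lemma tld_dist_le (f g : C(I, I)) (u : ℝ) : |tld f u - tld g u| ≤ dist f g := by
  have h := ContinuousMap.dist_apply_le_dist (f := f) (g := g) (Set.projIcc 0 1 zero_le_one u)
  rwa [Subtype.dist_eq, Real.dist_eq] at h

lemma tld_apply (f : C(I, I)) (x : I) : tld f x.1 = (f x : ℝ) := by
  simp [tld, Set.projIcc_val]

/-- Inf-convolution smoothing of `f` at scale `t`. -/
def sm (f : C(I, I)) (t x : ℝ) : ℝ :=
  sInf ((fun y => tld f y + (1/t) * |x - y|) '' Set.Icc (0:ℝ) 1)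

section sm

variable {f g : C(I, I)} {t t' x x' c : ℝ}

lemma sm_set_nonempty (f : C(I,I)) (t x : ℝ) :
    ((fun y => tld f y + (1/t) * |x - y|) '' Set.Icc (0:ℝ) 1).Nonempty :=
  ⟨_, Set.mem_image_of_mem _ (Set.mem_Icc.2 ⟨le_refl 0, zero_le_one⟩)⟩

lemma sm_set_bddBelow (ht : 0 < t) (f : C(I,I)) (x : ℝ) :
    BddBelow ((fun y => tld f y + (1/t) * |x - y|) '' Set.Icc (0:ℝ) 1) := by
  refine ⟨0, fun v hv => ?_⟩
  obtain ⟨y, -, rfl⟩ := hv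
  have := tld_nonneg f y
  positivity

lemma sm_nonneg (ht : 0 < t) : 0 ≤ sm f t x :=
  le_csInf (sm_set_nonempty f t x) (fun v hv => by
    obtain ⟨y, -, rfl⟩ := hv
    have := tld_nonneg f y
    positivity)

lemma sm_le (ht : 0 < t) (hx : x ∈ Set.Icc (0:ℝ) 1) : sm f t x ≤ tld f x := by
  have h := csInf_le (sm_set_bddBelow ht f x) (Set.mem_image_of_mem _ hx)
  rw [sm]
  simpa using h

lemma sm_le_one (ht : 0 < t) (hx : x ∈ Set.Icc (0:ℝ) 1) : sm f t x ≤ 1 :=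
  le_trans (sm_le ht hx) (tld_le_one f x)

/-- One-sided comparison bound, generic workhorse. -/
lemma sm_le_add (ht : 0 < t) (ht' : 0 < t')
    (hb : ∀ y ∈ Set.Icc (0:ℝ) 1,
      tld f y + (1/t) * |x - y| ≤ (tld g y + (1/t') * |x' - y|) + c) :
    sm f t x ≤ sm g t' x' + c := by
  have key : sm f t x - c ≤ sm g t' x' := by
    apply le_csInf (sm_set_nonempty g t' x')
    rintro v ⟨y, hy, rfl⟩
    have h1 : sm f t x ≤ tld f y + (1/t) * |x - y| :=
      csInf_le (sm_set_bddBelow ht f x) (Set.mem_image_of_mem _ hy)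
    have h2 := hb y hy
    linarith
  linarith

lemma sm_lip_x (ht : 0 < t) : |sm f t x - sm f t x'| ≤ (1/t) * |x - x'| := by
  rw [abs_sub_le_iff]
  constructor
  · have := sm_le_add (f := f) (g := f) (x := x) (x' := x') (c := (1/t) * |x - x'|) ht ht
      (fun y hy => by
        have h3 : |x - y| ≤ |x' - y| + |x - x'| := by
          have := abs_sub_abs_le_abs_sub (x - y) (x' - y)
          have h4 : |x - y| - |x' - y| ≤ |x - x'| := by
            calc |x - y| - |x' - y| ≤ |(x - y) - (x' - y)| := abs_sub_abs_le_abs_sub _ _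
              _ = |x - x'| := by ring_nf
          linarith
        have h5 : (1/t) * |x - y| ≤ (1/t) * (|x' - y| + |x - x'|) := by
          apply mul_le_mul_of_nonneg_left h3 (by positivity)
        nlinarith [h5])
    linarith
  · have := sm_le_add (f := f) (g := f) (x := x') (x' := x) (c := (1/t) * |x - x'|) ht ht
      (fun y hy => by
        have h4 : |x' - y| - |x - y| ≤ |x' - x| := by
          calc |x' - y| - |x - y| ≤ |(x' - y) - (x - y)| := abs_sub_abs_le_abs_sub _ _
            _ = |x' - x| := by ring_nf
        have h3 : |x' - y| ≤ |x - y| + |x - x'| := by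
          rw [abs_sub_comm x x']; linarith
        have h5 : (1/t) * |x' - y| ≤ (1/t) * (|x - y| + |x - x'|) := by
          apply mul_le_mul_of_nonneg_left h3 (by positivity)
        nlinarith [h5])
    linarith

lemma sm_dist_f (ht : 0 < t) : |sm f t x - sm g t x| ≤ dist f g := by
  rw [abs_sub_le_iff]
  constructor
  · have := sm_le_add (f := f) (g := g) (x := x) (x' := x) (c := dist f g) ht ht
      (fun y hy => by have := tld_dist_le f g y; rw [abs_sub_le_iff] at this; linarith)
    linarith
  · have := sm_le_add (f := g) (g := f) (x := x) (x' := x) (c := dist f g) ht ht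
      (fun y hy => by have := tld_dist_le f g y; rw [abs_sub_le_iff] at this; linarith)
    linarith

lemma sm_dist_t (ht : 0 < t) (ht' : 0 < t') (hx : x ∈ Set.Icc (-1:ℝ) 2) :
    |sm f t x - sm f t' x| ≤ 2 * |1/t - 1/t'| := by
  have haux : ∀ y ∈ Set.Icc (0:ℝ) 1, |x - y| ≤ 2 := by
    intro y hy
    rw [abs_le]
    constructor
    · nlinarith [hx.1, hx.2, hy.1, hy.2]
    · nlinarith [hx.1, hx.2, hy.1, hy.2]
  rw [abs_sub_le_iff]
  constructor
  · have := sm_le_add (f := f) (g := f) (x := x) (x' := x) (c := 2 * |1/t - 1/t'|) ht ht'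
      (fun y hy => by
        have h1 : (1/t) * |x - y| - (1/t') * |x - y| ≤ 2 * |1/t - 1/t'| := by
          calc (1/t) * |x - y| - (1/t') * |x - y| = (1/t - 1/t') * |x - y| := by ring
            _ ≤ |1/t - 1/t'| * |x - y| := by
                apply mul_le_mul_of_nonneg_right (le_abs_self _) (abs_nonneg _)
            _ ≤ |1/t - 1/t'| * 2 := by
                apply mul_le_mul_of_nonneg_left (haux y hy) (abs_nonneg _)
            _ = 2 * |1/t - 1/t'| := by ring
        linarith)
    linarith
  · have := sm_le_add (f := f) (g := f) (x := x) (x' := x) (c := 2 * |1/t - 1/t'|) ht' ht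
      (fun y hy => by
        have h1 : (1/t') * |x - y| - (1/t) * |x - y| ≤ 2 * |1/t - 1/t'| := by
          calc (1/t') * |x - y| - (1/t) * |x - y| = (1/t' - 1/t) * |x - y| := by ring
            _ ≤ |1/t' - 1/t| * |x - y| := by
                apply mul_le_mul_of_nonneg_right (le_abs_self _) (abs_nonneg _)
            _ ≤ |1/t' - 1/t| * 2 := by
                apply mul_le_mul_of_nonneg_left (haux y hy) (abs_nonneg _)
            _ = 2 * |1/t - 1/t'| := by rw [abs_sub_comm]; ring
        linarith)
    linarith

/-- Near-optimality: if `f` oscillates at most `ε` at scale `δuc` and `t ≤ δuc ≤ 1`,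
then the inf-convolution is `ε`-close to `f`. -/
lemma sm_close (ht : 0 < t) (hx : x ∈ Set.Icc (0:ℝ) 1) {δuc ε : ℝ} (hδ : 0 < δuc)
    (hε : 0 ≤ ε) (htδ : t ≤ δuc)
    (huc : ∀ v, |v - x| ≤ δuc → |tld f v - tld f x| ≤ ε) :
    tld f x - ε ≤ sm f t x := by
  apply le_csInf (sm_set_nonempty f t x)
  rintro v ⟨y, hy, rfl⟩
  rcases le_or_gt |x - y| δuc with hcase | hcase
  · have := huc y (by rwa [abs_sub_comm] at hcase)
    rw [abs_sub_le_iff] at this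
    have h2 : 0 ≤ (1/t) * |x - y| := by positivity
    linarith
  · have h1 : (1/t) * |x - y| ≥ (1/t) * δuc := by
      apply mul_le_mul_of_nonneg_left hcase.le (by positivity)
    have h2 : (1:ℝ) ≤ (1/t) * δuc := by
      rw [← div_le_iff₀' (by positivity : (0:ℝ) < 1/t)]
      simpa using htδ
    have h3 := tld_nonneg f y
    have h4 := tld_le_one f x
    linarith

end sm

/-- The smoothed interpolation with the identity. -/
def hf (f : C(I, I)) (t x : ℝ) : ℝ := (1 - t) * sm f t x + t * x

/-- The comb amplitude envelope. -/
def Bf (f : C(I, I)) (t x : ℝ) : ℝ := max 0 (t/2 - |hf f t x - x|)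

/-- The comb wavelength. -/
def lam (N : ℕ) (t : ℝ) : ℝ := t^2 / (32 * (4 * N + 8))

/-- The perturbed map, as a real function. -/
def Gf (N : ℕ) (f : C(I, I)) (t x : ℝ) : ℝ :=
  max 0 (min 1 (hf f t x + Bf f t x * Real.cos (Real.pi * x / lam N t)))

/-- The full homotopy, as a real function (`t ≤ 0` gives `f` itself). -/
def Θ (N : ℕ) (f : C(I, I)) (t x : ℝ) : ℝ := if t ≤ 0 then tld f x else Gf N f t x

section hf

variable {f g : C(I, I)} {t x x' : ℝ} {N : ℕ}

lemma hf_mem (ht : 0 < t) (ht1 : t ≤ 1) (hx : x ∈ Set.Icc (0:ℝ) 1) :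
    hf f t x ∈ Set.Icc (0:ℝ) 1 := by
  have h1 := sm_nonneg (f := f) (t := t) (x := x) ht
  have h2 := sm_le_one (f := f) ht hx
  constructor
  · have : 0 ≤ (1 - t) * sm f t x := by nlinarith
    have : 0 ≤ t * x := by nlinarith [hx.1]
    simp only [hf]; nlinarith
  · simp only [hf]; nlinarith [hx.2]

lemma hf_lip (ht : 0 < t) (ht1 : t ≤ 1) :
    |hf f t x - hf f t x'| ≤ (2/t) * |x - x'| := by
  have h1 := sm_lip_x (f := f) (t := t) (x := x) (x' := x') ht
  have h2 : |hf f t x - hf f t x'| ≤ (1 - t) * |sm f t x - sm f t x'| + t * |x - x'| := by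
    simp only [hf]
    calc |(1 - t) * sm f t x + t * x - ((1 - t) * sm f t x' + t * x')|
        = |(1 - t) * (sm f t x - sm f t x') + t * (x - x')| := by ring_nf
      _ ≤ |(1 - t) * (sm f t x - sm f t x')| + |t * (x - x')| := abs_add_le _ _
      _ = (1 - t) * |sm f t x - sm f t x'| + t * |x - x'| := by
          rw [abs_mul, abs_mul, abs_of_nonneg (by linarith : (0:ℝ) ≤ 1 - t),
            abs_of_nonneg ht.le]
  have h3 : (1 - t) * |sm f t x - sm f t x'| ≤ (1/t) * |x - x'| := by
    calc (1 - t) * |sm f t x - sm f t x'| ≤ 1 * |sm f t x - sm f t x'| := by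
          apply mul_le_mul_of_nonneg_right (by linarith) (abs_nonneg _)
      _ = |sm f t x - sm f t x'| := one_mul _
      _ ≤ (1/t) * |x - x'| := h1
  have h4 : t * |x - x'| ≤ (1/t) * |x - x'| := by
    apply mul_le_mul_of_nonneg_right ?_ (abs_nonneg _)
    rw [le_div_iff₀ ht]
    nlinarith
  have : (1/t) * |x - x'| + (1/t) * |x - x'| = (2/t) * |x - x'| := by ring
  linarith

lemma lam_pos (N : ℕ) (ht : 0 < t) : 0 < lam N t := by
  have : (0:ℝ) < 32 * (4 * N + 8) := by positivity
  exact div_pos (by positivity) this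

lemma Bf_le (f : C(I,I)) (t x : ℝ) : Bf f t x ≤ t/2 - |hf f t x - x| ∨ Bf f t x = 0 := by
  rcases le_or_gt (t/2 - |hf f t x - x|) 0 with h | h
  · right; simp only [Bf]; exact max_eq_left h
  · left; simp only [Bf]; rw [max_eq_right h.le]

lemma Bf_nonneg (f : C(I,I)) (t x : ℝ) : 0 ≤ Bf f t x := le_max_left _ _

lemma Bf_le_half (ht : 0 < t) : Bf f t x ≤ t/2 := by
  simp only [Bf]
  apply max_le (by linarith) (by nlinarith [abs_nonneg (hf f t x - x)])

lemma Gf_mem (N : ℕ) (f : C(I,I)) (t x : ℝ) : Gf N f t x ∈ Set.Icc (0:ℝ) 1 :=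
  ⟨le_max_left _ _, max_le zero_le_one (min_le_left _ _)⟩

lemma Θ_mem (N : ℕ) (f : C(I,I)) (t x : ℝ) : Θ N f t x ∈ Set.Icc (0:ℝ) 1 := by
  rw [Θ]
  split_ifs
  · exact tld_mem f x
  · exact Gf_mem N f t x

/-- Continuity of `x ↦ sm f t x` for fixed `f`, `t > 0`. -/
lemma sm_continuous_x (ht : 0 < t) : Continuous (fun x => sm f t x) := by
  have : LipschitzWith (Real.toNNReal (1/t)) (fun x => sm f t x) := by
    apply LipschitzWith.of_dist_le_mul
    intro a b
    rw [Real.dist_eq, Real.dist_eq, Real.coe_toNNReal _ (by positivity)]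
    exact sm_lip_x ht
  exact this.continuous

lemma hf_continuous_x (ht : 0 < t) : Continuous (fun x => hf f t x) := by
  have h := sm_continuous_x (f := f) ht
  unfold hf
  fun_prop

lemma Bf_continuous_x (ht : 0 < t) : Continuous (fun x => Bf f t x) := by
  have := hf_continuous_x (f := f) ht
  unfold Bf
  fun_prop

lemma Gf_continuous_x (ht : 0 < t) : Continuous (fun x => Gf N f t x) := by
  have h1 := hf_continuous_x (f := f) ht
  have h2 := Bf_continuous_x (f := f) ht
  unfold Gf
  fun_prop

/-- Existence of a fixed point of `hf f t` in `[0,1]`. -/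
lemma hf_exists_fixedPoint (ht : 0 < t) (ht1 : t ≤ 1) :
    ∃ p ∈ Set.Icc (0:ℝ) 1, hf f t p = p := by
  have hcont : Continuous (fun x => x - hf f t x) := by
    have := hf_continuous_x (f := f) ht
    fun_prop
  have h0 : (fun x => x - hf f t x) 0 ≤ 0 := by
    have := (hf_mem (f := f) ht ht1 (Set.mem_Icc.2 ⟨le_refl 0, zero_le_one⟩)).1
    simpa using this
  have h1 : 0 ≤ (fun x => x - hf f t x) 1 := by
    have := (hf_mem (f := f) ht ht1 (Set.mem_Icc.2 ⟨zero_le_one, le_refl 1⟩)).2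
    simpa using this
  have := intermediate_value_Icc (zero_le_one) (hcont.continuousOn (s := Set.Icc 0 1))
  have hmem : (0:ℝ) ∈ Set.Icc ((fun x => x - hf f t x) 0) ((fun x => x - hf f t x) 1) :=
    Set.mem_Icc.2 ⟨h0, h1⟩
  obtain ⟨p, hp, hfp⟩ := this hmem
  exact ⟨p, hp, by simp at hfp; linarith⟩

end hf

section entropy

variable {f : C(I, I)} {t : ℝ} {N : ℕ}

set_option maxHeartbeats 1600000 in
/-- The map `Gf` has an `N`-branched horseshoe. -/
lemma Gf_horseshoe (hN : 0 < N) (ht : 0 < t) (ht1 : t ≤ 1) (g : C(I, I))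
    (hg : ∀ x : I, (g x : ℝ) = Gf N f t x.1) :
    (Real.log N : EReal) ≤ Dynamics.coverEntropy ⇑g Set.univ := by
  obtain ⟨p, hp, hfix⟩ := hf_exists_fixedPoint (f := f) ht ht1
  have hL : 0 < lam N t := lam_pos N ht
  set L : ℝ := lam N t with hLdef
  set δ : ℝ := t^2/32 with hδdef
  have hδpos : 0 < δ := by positivity
  have hδL : δ = L * (4 * N + 8) := by
    rw [hδdef, hLdef, lam]; field_simp
  have hδt : δ ≤ t/32 := by rw [hδdef]; nlinarith
  have hδ1 : δ ≤ 1/32 := le_trans hδt (by linarith)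
  set q : ℝ := min p (1 - δ) with hqdef
  have hq0 : 0 ≤ q := le_min hp.1 (by linarith)
  have hq1 : q + δ ≤ 1 := by
    have : q ≤ 1 - δ := min_le_right _ _
    linarith
  have hqp : q ≤ p := min_le_left _ _
  have hpq : p ≤ q + δ := by
    rcases le_or_gt p (1 - δ) with h | h
    · rw [hqdef, min_eq_left h]; linarith
    · rw [hqdef, min_eq_right h.le]; linarith [hp.2]
  -- window bound
  have hwin : ∀ x ∈ Set.Icc q (q + δ), |hf f t x - x| ≤ t/8 := by
    intro x hx
    have hxp : |x - p| ≤ δ := by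
      rw [abs_le]; constructor
      · linarith [hx.1, hpq]
      · linarith [hx.2, hqp]
    have h1 : |hf f t x - hf f t p| ≤ (2/t) * |x - p| := hf_lip ht ht1
    have h2 : (2/t) * |x - p| ≤ (2/t) * δ := by
      apply mul_le_mul_of_nonneg_left hxp (by positivity)
    have h3 : (2/t) * δ = t/16 := by rw [hδdef]; field_simp; ring
    rw [hfix] at h1
    have h5 : |p - x| ≤ δ := by rwa [abs_sub_comm]
    have h6 : |hf f t x - x| ≤ |hf f t x - p| + |p - x| := abs_sub_le _ _ _
    have h7 : |hf f t x - p| ≤ t/16 := by linarith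
    have h8 : δ ≤ t/16 := by linarith [hδt, ht.le]
    linarith
  have hB : ∀ x ∈ Set.Icc q (q + δ), 3*t/8 ≤ Bf f t x := by
    intro x hx
    have h1 := hwin x hx
    have h2 : t/2 - |hf f t x - x| ≥ 3*t/8 := by linarith
    calc (3:ℝ)*t/8 ≤ t/2 - |hf f t x - x| := h2
      _ ≤ Bf f t x := le_max_right _ _
  -- grid
  set M : ℕ := ⌈q / (2*L)⌉₊ with hMdef
  have hM1 : q ≤ 2*L*M := by
    have h := Nat.le_ceil (q / (2*L))
    rw [← hMdef] at h
    rw [div_le_iff₀ (by positivity : (0:ℝ) < 2*L)] at h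
    linarith
  have hM2 : 2*L*M ≤ q + 2*L := by
    have h := Nat.ceil_lt_add_one (by positivity : (0:ℝ) ≤ q / (2*L))
    rw [← hMdef] at h
    have h3 : (M:ℝ) * (2*L) < (q/(2*L) + 1) * (2*L) :=
      mul_lt_mul_of_pos_right h (by positivity)
    have h4 : (q/(2*L) + 1) * (2*L) = q + 2*L := by field_simp
    nlinarith
  have hab : ∀ i : Fin N, L * (2*M + 2*(i:ℕ) + 1) ≤ L * (2*M + 2*(i:ℕ) + 2) := by
    intro i
    apply mul_le_mul_of_nonneg_left (by norm_num) hL.le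
  have haq : ∀ i : Fin N, q ≤ L * (2*M + 2*(i:ℕ) + 1) := by
    intro i
    nlinarith [hL.le, Nat.cast_nonneg (α := ℝ) (i:ℕ), Nat.cast_nonneg (α := ℝ) M]
  have hbq : ∀ i : Fin N, L * (2*M + 2*(i:ℕ) + 2) ≤ q + δ := by
    intro i
    have hi : ((i:ℕ):ℝ) + 1 ≤ (N:ℝ) := by exact_mod_cast Nat.lt_iff_add_one_le.1 i.isLt
    have h2 : L * (2*M + 2*(i:ℕ) + 2) ≤ 2*L*M + L*(2*N) := by nlinarith [hL.le]
    have h3 : 2*L*M + L*(2*N) ≤ q + 2*L + L*(2*N) := by linarith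
    have h4 : q + 2*L + L*(2*N) ≤ q + δ := by rw [hδL]; nlinarith [hL.le]
    linarith
  -- endpoint values of the comb
  have hcos_a : ∀ i : Fin N,
      Real.cos (Real.pi * (L * (2*M + 2*(i:ℕ) + 1)) / L) = -1 := by
    intro i
    have harg : Real.pi * (L * (2*M + 2*(i:ℕ) + 1)) / L
        = ((M + (i:ℕ) : ℕ) : ℝ) * (2*Real.pi) + Real.pi := by
      field_simp
      push_cast
      ring
    rw [harg]
    exact Real.cos_nat_mul_two_pi_add_pi _
  have hcos_b : ∀ i : Fin N,
      Real.cos (Real.pi * (L * (2*M + 2*(i:ℕ) + 2)) / L) = 1 := by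
    intro i
    have harg : Real.pi * (L * (2*M + 2*(i:ℕ) + 2)) / L
        = ((M + (i:ℕ) + 1 : ℕ) : ℝ) * (2*Real.pi) := by
      field_simp
      push_cast
      ring
    rw [harg]
    exact Real.cos_nat_mul_two_pi _
  -- endpoint bounds for Gf
  have hGa : ∀ i : Fin N, Gf N f t (L * (2*M + 2*(i:ℕ) + 1)) ≤ q := by
    intro i
    have hmem : L * (2*M + 2*(i:ℕ) + 1) ∈ Set.Icc q (q + δ) :=
      ⟨haq i, le_trans (hab i) (hbq i)⟩
    have h1 := hwin _ hmem
    have h2 := hB _ hmem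
    rw [Gf, ← hLdef, hcos_a i]
    have h5 : δ ≤ t/4 := by linarith [hδt, ht.le]
    have hv : hf f t (L * (2*M + 2*(i:ℕ) + 1))
        + Bf f t (L * (2*M + 2*(i:ℕ) + 1)) * (-1) ≤ q := by
      have h3 : hf f t (L * (2*M + 2*(i:ℕ) + 1)) ≤ L * (2*M + 2*(i:ℕ) + 1) + t/8 := by
        have := (abs_le.1 h1).2; linarith
      have h4 : L * (2*M + 2*(i:ℕ) + 1) ≤ q + δ := le_trans (hab i) (hbq i)
      nlinarith
    calc max 0 (min 1 (hf f t (L * (2*M + 2*(i:ℕ) + 1))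
          + Bf f t (L * (2*M + 2*(i:ℕ) + 1)) * (-1)))
        ≤ max 0 q := max_le_max (le_refl 0) (le_trans (min_le_right _ _) hv)
      _ = q := max_eq_right hq0
  have hGb : ∀ i : Fin N, q + δ ≤ Gf N f t (L * (2*M + 2*(i:ℕ) + 2)) := by
    intro i
    have hmem : L * (2*M + 2*(i:ℕ) + 2) ∈ Set.Icc q (q + δ) :=
      ⟨le_trans (haq i) (hab i), hbq i⟩
    have h1 := hwin _ hmem
    have h2 := hB _ hmem
    rw [Gf, ← hLdef, hcos_b i]
    have h5 : δ ≤ t/4 := by linarith [hδt, ht.le]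
    have hv : q + t/4 ≤ hf f t (L * (2*M + 2*(i:ℕ) + 2))
        + Bf f t (L * (2*M + 2*(i:ℕ) + 2)) * 1 := by
      have h3 : L * (2*M + 2*(i:ℕ) + 2) - t/8 ≤ hf f t (L * (2*M + 2*(i:ℕ) + 2)) := by
        have := (abs_le.1 h1).1; linarith
      have h4 : q ≤ L * (2*M + 2*(i:ℕ) + 2) := le_trans (haq i) (hab i)
      nlinarith
    have h6 : q + δ ≤ min 1 (hf f t (L * (2*M + 2*(i:ℕ) + 2))
        + Bf f t (L * (2*M + 2*(i:ℕ) + 2)) * 1) := le_min (by linarith) (by linarith)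
    exact le_trans h6 (le_max_right _ _)
  -- the horseshoe intervals inside I
  have hsub : ∀ i : Fin N, Set.Icc (L * (2*M + 2*(i:ℕ) + 1)) (L * (2*M + 2*(i:ℕ) + 2))
      ⊆ Set.Icc (0:ℝ) 1 := by
    intro i y hy
    exact ⟨le_trans hq0 (le_trans (haq i) hy.1), le_trans hy.2 (le_trans (hbq i) hq1)⟩
  apply horseshoe_coverEntropy (ε := L) ⇑g hN
    (fun i => {y : I | (y:ℝ) ∈ Set.Icc (L * (2*M + 2*(i:ℕ) + 1)) (L * (2*M + 2*(i:ℕ) + 2))}) hL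
  · -- separation
    intro i j hij x hx y hy
    simp only [Set.mem_setOf_eq] at hx hy
    rw [Subtype.dist_eq, Real.dist_eq]
    rcases lt_or_gt_of_ne (fun h : (i:ℕ) = (j:ℕ) => hij (Fin.ext h)) with h | h
    · have h1 : (x:ℝ) ≤ L * (2*M + 2*(i:ℕ) + 2) := hx.2
      have h2 : L * (2*M + 2*(j:ℕ) + 1) ≤ (y:ℝ) := hy.1
      have h3 : L * (2*M + 2*(i:ℕ) + 2) + L ≤ L * (2*M + 2*(j:ℕ) + 1) := by
        have : ((i:ℕ):ℝ) + 1 ≤ ((j:ℕ):ℝ) := by exact_mod_cast h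
        nlinarith
      rw [abs_sub_comm, abs_of_nonneg (by linarith)]
      linarith
    · have h1 : (y:ℝ) ≤ L * (2*M + 2*(j:ℕ) + 2) := hy.2
      have h2 : L * (2*M + 2*(i:ℕ) + 1) ≤ (x:ℝ) := hx.1
      have h3 : L * (2*M + 2*(j:ℕ) + 2) + L ≤ L * (2*M + 2*(i:ℕ) + 1) := by
        have : ((j:ℕ):ℝ) + 1 ≤ ((i:ℕ):ℝ) := by exact_mod_cast h
        nlinarith
      rw [abs_of_nonneg (by linarith)]
      linarith
  · -- nonempty
    intro i
    exact ⟨⟨_, hsub i ⟨le_refl _, hab i⟩⟩, by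
      simp only [Set.mem_setOf_eq]
      exact ⟨le_refl _, hab i⟩⟩
  · -- images
    intro i j y hy
    simp only [Set.mem_setOf_eq] at hy
    have hyq : (y:ℝ) ∈ Set.Icc q (q + δ) :=
      ⟨le_trans (haq j) hy.1, le_trans hy.2 (hbq j)⟩
    have hivt : (y:ℝ) ∈ (fun x => Gf N f t x) '' Set.Icc (L * (2*M + 2*(i:ℕ) + 1))
        (L * (2*M + 2*(i:ℕ) + 2)) := by
      apply intermediate_value_Icc (hab i) ((Gf_continuous_x (f := f) (N := N) ht).continuousOn)
      exact ⟨le_trans (hGa i) hyq.1, le_trans hyq.2 (hGb i)⟩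
    obtain ⟨x, hx, hgx⟩ := hivt
    refine ⟨⟨x, hsub i hx⟩, by simpa only [Set.mem_setOf_eq] using hx, ?_⟩
    apply Subtype.ext
    rw [hg ⟨x, hsub i hx⟩]
    exact hgx

end entropy

section continuity

variable {N : ℕ}

/-- Joint continuity of the inf-convolution for positive `t`. -/
lemma sm_continuousAt {f₀ : C(I,I)} {t₀ x₀ : ℝ} (ht₀ : 0 < t₀) (hx₀ : x₀ ∈ Set.Icc (0:ℝ) 1) :
    ContinuousAt (fun z : C(I,I) × ℝ × ℝ => sm z.1 z.2.1 z.2.2) (f₀, t₀, x₀) := by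
  rw [Metric.continuousAt_iff]
  intro ε hε
  refine ⟨min (min (t₀/2) 1) (min (ε/3) (min (ε*t₀^2/12) (ε*t₀/6))), by positivity, ?_⟩
  rintro ⟨f, t, x⟩ hz
  set δ := min (min (t₀/2) 1) (min (ε/3) (min (ε*t₀^2/12) (ε*t₀/6))) with hδdef
  simp only [Prod.dist_eq, max_lt_iff] at hz
  have hdf : dist f f₀ < δ := hz.1
  have hdt : |t - t₀| < δ := by have := hz.2.1; rwa [Real.dist_eq] at this
  have hdx : |x - x₀| < δ := by have := hz.2.2; rwa [Real.dist_eq] at this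
  have hδ1 : δ ≤ t₀/2 := le_trans (min_le_left _ _) (min_le_left _ _)
  have hδ2 : δ ≤ 1 := le_trans (min_le_left _ _) (min_le_right _ _)
  have hδ3 : δ ≤ ε/3 := le_trans (min_le_right _ _) (min_le_left _ _)
  have hδ4 : δ ≤ ε*t₀^2/12 := le_trans (min_le_right _ _)
    (le_trans (min_le_right _ _) (min_le_left _ _))
  have hδ5 : δ ≤ ε*t₀/6 := le_trans (min_le_right _ _)
    (le_trans (min_le_right _ _) (min_le_right _ _))
  have ht : t₀/2 < t := by
    have := (abs_lt.1 hdt).1; linarith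
  have htpos : 0 < t := by linarith
  have hxmem : x ∈ Set.Icc (-1:ℝ) 2 := by
    have h1 := (abs_lt.1 hdx).1
    have h2 := (abs_lt.1 hdx).2
    constructor
    · nlinarith [hx₀.1]
    · nlinarith [hx₀.2]
  have hA : |sm f t x - sm f₀ t x| ≤ dist f f₀ := sm_dist_f htpos
  have hB : |sm f₀ t x - sm f₀ t₀ x| ≤ 2 * |1/t - 1/t₀| := sm_dist_t htpos ht₀ hxmem
  have hC : |sm f₀ t₀ x - sm f₀ t₀ x₀| ≤ (1/t₀) * |x - x₀| := sm_lip_x ht₀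
  have hBbound : |1/t - 1/t₀| < ε/6 := by
    have heq : 1/t - 1/t₀ = (t₀ - t)/(t*t₀) := by field_simp
    rw [heq, abs_div, abs_of_pos (by positivity : (0:ℝ) < t*t₀)]
    rw [div_lt_iff₀ (by positivity : (0:ℝ) < t*t₀)]
    have h1 : |t₀ - t| < δ := by rwa [abs_sub_comm]
    nlinarith [abs_nonneg (t₀ - t), ht₀]
  have hCbound : (1/t₀) * |x - x₀| < ε/6 + ε/6 := by
    have h2 : (1/t₀) * |x - x₀| ≤ (1/t₀) * δ := by
      apply mul_le_mul_of_nonneg_left hdx.le (by positivity)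
    have h3 : (1/t₀) * δ ≤ ε/6 := by
      rw [← le_div_iff₀' (by positivity : (0:ℝ) < 1/t₀)]
      calc δ ≤ ε*t₀/6 := hδ5
        _ = (ε/6) / (1/t₀) := by field_simp
        _ ≤ _ := le_refl _
    linarith [hε]
  rw [Real.dist_eq]
  calc |sm f t x - sm f₀ t₀ x₀|
      ≤ |sm f t x - sm f₀ t x| + |sm f₀ t x - sm f₀ t₀ x| + |sm f₀ t₀ x - sm f₀ t₀ x₀| := by
        have := abs_sub_le (sm f t x) (sm f₀ t x) (sm f₀ t₀ x₀)
        have := abs_sub_le (sm f₀ t x) (sm f₀ t₀ x) (sm f₀ t₀ x₀)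
        linarith
    _ < ε/3 + 2*(ε/6) + (ε/6 + ε/6) := by
        have := lt_of_le_of_lt hB (by linarith : 2 * |1/t - 1/t₀| < 2*(ε/6))
        have := lt_of_le_of_lt hC hCbound
        have := lt_of_le_of_lt hA (lt_of_lt_of_le hdf hδ3)
        linarith
    _ = ε := by ring

/-- Joint continuity of `Gf` for positive `t`. -/
lemma Gf_continuousAt {f₀ : C(I,I)} {t₀ x₀ : ℝ} (ht₀ : 0 < t₀) (hx₀ : x₀ ∈ Set.Icc (0:ℝ) 1) :
    ContinuousAt (fun z : C(I,I) × ℝ × ℝ => Gf N z.1 z.2.1 z.2.2) (f₀, t₀, x₀) := by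
  have hsm : ContinuousAt (fun z : C(I,I) × ℝ × ℝ => sm z.1 z.2.1 z.2.2) (f₀, t₀, x₀) :=
    sm_continuousAt ht₀ hx₀
  have ht : ContinuousAt (fun z : C(I,I) × ℝ × ℝ => z.2.1) (f₀, t₀, x₀) :=
    (continuous_fst.comp continuous_snd).continuousAt
  have hx : ContinuousAt (fun z : C(I,I) × ℝ × ℝ => z.2.2) (f₀, t₀, x₀) :=
    (continuous_snd.comp continuous_snd).continuousAt
  have hhf : ContinuousAt (fun z : C(I,I) × ℝ × ℝ => hf z.1 z.2.1 z.2.2) (f₀, t₀, x₀) := by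
    simp only [hf]
    exact ((continuousAt_const.sub ht).mul hsm).add (ht.mul hx)
  have hBf : ContinuousAt (fun z : C(I,I) × ℝ × ℝ => Bf z.1 z.2.1 z.2.2) (f₀, t₀, x₀) := by
    simp only [Bf]
    exact continuousAt_const.max ((ht.div_const 2).sub (hhf.sub hx).abs)
  have hlam : ContinuousAt (fun z : C(I,I) × ℝ × ℝ => lam N z.2.1) (f₀, t₀, x₀) := by
    simp only [lam]
    exact (ht.pow 2).div_const _
  have hlamne : lam N t₀ ≠ 0 := (lam_pos N ht₀).ne'
  have hcos : ContinuousAt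
      (fun z : C(I,I) × ℝ × ℝ => Real.cos (Real.pi * z.2.2 / lam N z.2.1)) (f₀, t₀, x₀) :=
    Real.continuous_cos.continuousAt.comp ((continuousAt_const.mul hx).div hlam hlamne)
  simp only [Gf]
  exact continuousAt_const.max (continuousAt_const.min (hhf.add (hBf.mul hcos)))

/-- The clamp function is 1-Lipschitz. -/
lemma clamp_lip (a b : ℝ) : |max 0 (min 1 a) - max 0 (min 1 b)| ≤ |a - b| := by
  have h1 : |max 0 (min 1 a) - max 0 (min 1 b)| ≤ |min 1 a - min 1 b| := by
    rw [max_comm 0 (min 1 a), max_comm 0 (min 1 b)]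
    exact abs_max_sub_max_le_abs _ _ _
  have h2 : |min 1 a - min 1 b| ≤ |a - b| := by
    rcases le_total a 1 with h3 | h3 <;> rcases le_total b 1 with h4 | h4
    · rw [min_eq_right h3, min_eq_right h4]
    · rw [min_eq_right h3, min_eq_left h4]
      rw [abs_of_nonpos (by linarith)]
      rcases le_total a b with h5 | h5
      · rw [abs_of_nonpos (by linarith)]; linarith
      · rw [abs_of_nonneg (by linarith)]; linarith
    · rw [min_eq_left h3, min_eq_right h4]
      rw [abs_of_nonneg (by linarith)]
      rcases le_total a b with h5 | h5
      · rw [abs_of_nonpos (by linarith)]; linarith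
      · rw [abs_of_nonneg (by linarith)]; linarith
    · rw [min_eq_left h3, min_eq_left h4]
      simp [abs_nonneg]
  linarith

lemma hf_self_clamp (ht : 0 < t) (ht1 : t ≤ 1) {x : ℝ} (hx : x ∈ Set.Icc (0:ℝ) 1)
    (f : C(I,I)) : max 0 (min 1 (hf f t x)) = hf f t x := by
  have h := hf_mem (f := f) ht ht1 hx
  rw [min_eq_right h.2, max_eq_right h.1]

/-- Distance from `Gf` to `hf`. -/
lemma Gf_close_hf (ht : 0 < t) (ht1 : t ≤ 1) {x : ℝ} (hx : x ∈ Set.Icc (0:ℝ) 1)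
    (f : C(I,I)) : |Gf N f t x - hf f t x| ≤ t/2 := by
  have h1 : Gf N f t x = max 0 (min 1 (hf f t x + Bf f t x * Real.cos (Real.pi * x / lam N t))) :=
    rfl
  calc |Gf N f t x - hf f t x|
      = |max 0 (min 1 (hf f t x + Bf f t x * Real.cos (Real.pi * x / lam N t)))
          - max 0 (min 1 (hf f t x))| := by rw [h1, hf_self_clamp ht ht1 hx]
    _ ≤ |(hf f t x + Bf f t x * Real.cos (Real.pi * x / lam N t)) - hf f t x| := clamp_lip _ _
    _ = |Bf f t x * Real.cos (Real.pi * x / lam N t)| := by ring_nf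
    _ ≤ Bf f t x * 1 := by
        rw [abs_mul, abs_of_nonneg (Bf_nonneg f t x)]
        exact mul_le_mul_of_nonneg_left (Real.abs_cos_le_one _) (Bf_nonneg f t x)
    _ ≤ t/2 := by rw [mul_one]; exact Bf_le_half ht

/-- Distance from `hf` to `f`, controlled by the modulus of continuity. -/
lemma hf_close_tld (ht : 0 < t) (ht1 : t ≤ 1) {x : ℝ} (hx : x ∈ Set.Icc (0:ℝ) 1)
    {f f₀ : C(I,I)} {δuc ε' : ℝ} (hδuc : 0 < δuc) (hε' : 0 ≤ ε') (htδ : t ≤ δuc)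
    (huc : ∀ u v : ℝ, |u - v| ≤ δuc → |tld f₀ u - tld f₀ v| ≤ ε') :
    |hf f t x - tld f x| ≤ ε' + 2 * dist f f₀ + t := by
  have hub : sm f t x ≤ tld f x := sm_le ht hx
  have hlb : tld f x - (ε' + 2 * dist f f₀) ≤ sm f t x := by
    have h1 : sm f₀ t x - dist f f₀ ≤ sm f t x := by
      have h := sm_dist_f (f := f₀) (g := f) (t := t) (x := x) ht
      rw [abs_sub_le_iff] at h
      have hcomm : dist f₀ f = dist f f₀ := dist_comm _ _
      linarith [h.1]
    have h2 : tld f₀ x - ε' ≤ sm f₀ t x :=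
      sm_close ht hx hδuc hε' htδ (fun v hv => huc v x hv)
    have h3 : tld f x - dist f f₀ ≤ tld f₀ x := by
      have := tld_dist_le f f₀ x
      rw [abs_sub_le_iff] at this
      linarith [this.1]
    linarith
  have hsmtld : |sm f t x - tld f x| ≤ ε' + 2 * dist f f₀ := by
    rw [abs_sub_le_iff]
    constructor
    · linarith [dist_nonneg (x := f) (y := f₀)]
    · linarith
  have hdecomp : hf f t x - tld f x
      = (1 - t) * (sm f t x - tld f x) + t * (x - tld f x) := by
    simp only [hf]; ring
  have hxb : |x - tld f x| ≤ 1 := by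
    have h1 := tld_nonneg f x
    have h2 := tld_le_one f x
    rw [abs_le]; constructor <;> [nlinarith [hx.1]; nlinarith [hx.2]]
  calc |hf f t x - tld f x|
      = |(1 - t) * (sm f t x - tld f x) + t * (x - tld f x)| := by rw [hdecomp]
    _ ≤ |(1 - t) * (sm f t x - tld f x)| + |t * (x - tld f x)| := abs_add_le _ _
    _ = (1 - t) * |sm f t x - tld f x| + t * |x - tld f x| := by
        rw [abs_mul, abs_mul, abs_of_nonneg (by linarith : (0:ℝ) ≤ 1 - t),
          abs_of_nonneg ht.le]
    _ ≤ 1 * (ε' + 2 * dist f f₀) + t * 1 := by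
        have g1 : (1 - t) * |sm f t x - tld f x| ≤ 1 * |sm f t x - tld f x| := by
          apply mul_le_mul_of_nonneg_right (by linarith) (abs_nonneg _)
        have g2 : 1 * |sm f t x - tld f x| ≤ 1 * (ε' + 2 * dist f f₀) := by
          rw [one_mul, one_mul]; exact hsmtld
        have g3 : t * |x - tld f x| ≤ t * 1 := mul_le_mul_of_nonneg_left hxb ht.le
        linarith
    _ = ε' + 2 * dist f f₀ + t := by ring

/-- The full homotopy function is (jointly) continuous. -/
lemma theta_continuous (N : ℕ) :
    Continuous (fun z : (C(I,I) × I) × I => Θ N z.1.1 z.1.2.1 z.2.1) := by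
  rw [continuous_iff_continuousAt]
  rintro ⟨⟨f₀, t₀⟩, x₀⟩
  rcases eq_or_lt_of_le t₀.2.1 with ht₀ | ht₀
  · -- t₀ = 0 : the hard case
    rw [Metric.continuousAt_iff]
    intro ε hε
    obtain ⟨δuc, hδucpos, huc'⟩ :=
      Metric.uniformContinuous_iff.1 (tld_uniformContinuous f₀) (ε/8) (by positivity)
    have huc : ∀ u v : ℝ, |u - v| ≤ δuc/2 → |tld f₀ u - tld f₀ v| ≤ ε/8 := by
      intro u v huv
      have := huc' (a := u) (b := v) (by rw [Real.dist_eq]; linarith)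
      rw [Real.dist_eq] at this
      linarith
    refine ⟨min (δuc/2) (ε/16), by positivity, ?_⟩
    rintro ⟨⟨f, t⟩, x⟩ hz
    simp only [Prod.dist_eq, max_lt_iff] at hz
    have hdf : dist f f₀ < min (δuc/2) (ε/16) := hz.1.1
    have hdt : |t.1 - t₀.1| < min (δuc/2) (ε/16) := by
      have := hz.1.2; rwa [Subtype.dist_eq, Real.dist_eq] at this
    have hdx : |x.1 - x₀.1| < min (δuc/2) (ε/16) := by
      have := hz.2; rwa [Subtype.dist_eq, Real.dist_eq] at this
    have ht0 : t₀.1 = 0 := ht₀.symm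
    have htt : t.1 < min (δuc/2) (ε/16) := by
      have := (abs_lt.1 hdt).2; rw [ht0] at this; linarith
    have hval0 : Θ N f₀ t₀.1 x₀.1 = tld f₀ x₀.1 := by rw [Θ, if_pos (le_of_eq ht0)]
    rw [Real.dist_eq, hval0]
    have hfx : |tld f x.1 - tld f₀ x₀.1| < ε/16 + ε/8 := by
      have h1 := tld_dist_le f f₀ x.1
      have h2 := huc x.1 x₀.1 (by
        have := (abs_lt.1 hdx).1
        have := (abs_lt.1 hdx).2
        have h3 : |x.1 - x₀.1| ≤ min (δuc/2) (ε/16) := le_of_lt hdx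
        exact le_trans h3 (min_le_left _ _))
      have h4 : dist f f₀ < ε/16 := lt_of_lt_of_le hdf (min_le_right _ _)
      calc |tld f x.1 - tld f₀ x₀.1|
          ≤ |tld f x.1 - tld f₀ x.1| + |tld f₀ x.1 - tld f₀ x₀.1| := abs_sub_le _ _ _
        _ < ε/16 + ε/8 := by
            have := lt_of_le_of_lt h1 h4
            linarith [h2, this]
    rcases le_or_gt t.1 0 with hcase | hcase
    · rw [Θ, if_pos hcase]
      linarith
    · rw [Θ, if_neg (not_le.2 hcase)]
      have ht1 : t.1 ≤ 1 := t.2.2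
      have hxmem : x.1 ∈ Set.Icc (0:ℝ) 1 := x.2
      have hGf := Gf_close_hf (N := N) hcase ht1 hxmem f
      have htδuc : t.1 ≤ δuc/2 := le_of_lt (lt_of_lt_of_le htt (min_le_left _ _))
      have hhf := hf_close_tld hcase ht1 hxmem (f := f) (f₀ := f₀) (by positivity)
        (by positivity) htδuc huc
      have hdf16 : dist f f₀ < ε/16 := lt_of_lt_of_le hdf (min_le_right _ _)
      have htt16 : t.1 < ε/16 := lt_of_lt_of_le htt (min_le_right _ _)
      calc |Gf N f t.1 x.1 - tld f₀ x₀.1|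
          ≤ |Gf N f t.1 x.1 - hf f t.1 x.1| + |hf f t.1 x.1 - tld f x.1|
              + |tld f x.1 - tld f₀ x₀.1| := by
            have := abs_sub_le (Gf N f t.1 x.1) (hf f t.1 x.1) (tld f₀ x₀.1)
            have := abs_sub_le (hf f t.1 x.1) (tld f x.1) (tld f₀ x₀.1)
            linarith
        _ < t.1/2 + (ε/8 + 2 * (ε/16) + t.1) + (ε/16 + ε/8) := by
            have hg2 : |hf f t.1 x.1 - tld f x.1| < ε/8 + 2*(ε/16) + t.1 := by
              have : (ε/8 : ℝ) + 2 * dist f f₀ + t.1 < ε/8 + 2*(ε/16) + t.1 := by linarith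
              linarith [hhf]
            linarith [hGf, hfx]
        _ ≤ ε/32 + (ε/8 + ε/8 + ε/16) + (ε/16 + ε/8) := by linarith
        _ < ε := by linarith
  · -- t₀ > 0 : locally agrees with Gf
    have hopen : IsOpen {z : (C(I,I) × I) × I | 0 < z.1.2.1} := by
      have : Continuous (fun z : (C(I,I) × I) × I => z.1.2.1) :=
        continuous_subtype_val.comp (continuous_snd.comp continuous_fst)
      exact isOpen_Ioi.preimage this
    have hmem : ((f₀, t₀), x₀) ∈ {z : (C(I,I) × I) × I | 0 < z.1.2.1} := ht₀
    have heq : (fun z : (C(I,I) × I) × I => Θ N z.1.1 z.1.2.1 z.2.1)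
        =ᶠ[nhds ((f₀, t₀), x₀)]
        (fun z : (C(I,I) × I) × I => Gf N z.1.1 z.1.2.1 z.2.1) := by
      filter_upwards [hopen.mem_nhds hmem] with z hzpos
      rw [Θ, if_neg (not_le.2 hzpos)]
    rw [continuousAt_congr heq]
    have hproj : Continuous (fun z : (C(I,I) × I) × I => (z.1.1, (z.1.2.1, z.2.1))) := by
      apply Continuous.prodMk (continuous_fst.comp continuous_fst)
      exact Continuous.prodMk (continuous_subtype_val.comp (continuous_snd.comp continuous_fst))
        (continuous_subtype_val.comp continuous_snd)
    have hcomp : (fun z : (C(I,I) × I) × I => Gf N z.1.1 z.1.2.1 z.2.1)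
        = (fun v : C(I,I) × ℝ × ℝ => Gf N v.1 v.2.1 v.2.2)
          ∘ (fun z : (C(I,I) × I) × I => (z.1.1, (z.1.2.1, z.2.1))) := rfl
    rw [hcomp]
    exact ContinuousAt.comp (Gf_continuousAt (N := N) ht₀ x₀.2) hproj.continuousAt

end continuity


/-- The homotopy. -/
def Hmap (N : ℕ) : C(I,I) × I → C(I,I) := fun p =>
  { toFun := fun x => ⟨Θ N p.1 p.2.1 x.1, Θ_mem N p.1 p.2.1 x.1⟩
    continuous_toFun := by
      apply Continuous.subtype_mk
      have h1 : Continuous (fun x : I => ((p, x) : (C(I,I) × I) × I)) :=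
        continuous_const.prodMk continuous_id
      exact (theta_continuous N).comp h1 }

lemma Hmap_continuous (N : ℕ) : Continuous (Hmap N) := by
  apply ContinuousMap.continuous_of_continuous_uncurry
  exact Continuous.subtype_mk (theta_continuous N) _

lemma Hmap_zero (N : ℕ) (f : C(I,I)) : Hmap N (f, 0) = f := by
  ext x
  show Θ N f ((0 : I) : ℝ) x.1 = ((f x) : ℝ)
  have h0 : ((0 : I) : ℝ) = 0 := rfl
  rw [h0, Θ, if_pos (le_refl (0:ℝ))]
  exact tld_apply f x

lemma hf_one (f : C(I,I)) (y : ℝ) : hf f 1 y = y := by simp [hf]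

lemma Hmap_one (N : ℕ) (f g : C(I,I)) : Hmap N (f, 1) = Hmap N (g, 1) := by
  ext x
  show Θ N f ((1 : I) : ℝ) x.1 = Θ N g ((1 : I) : ℝ) x.1
  have h1 : ((1 : I) : ℝ) = 1 := rfl
  rw [h1, Θ, Θ, if_neg (by norm_num), if_neg (by norm_num)]
  simp only [Gf, Bf, hf_one]

lemma Hmap_entropy {N : ℕ} (hN : 0 < N) (f : C(I,I)) (t : I) (ht : 0 < t) :
    (Real.log N : EReal) ≤ Dynamics.coverEntropy ⇑(Hmap N (f, t)) Set.univ := by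
  have ht' : (0:ℝ) < t.1 := ht
  apply Gf_horseshoe hN ht' t.2.2 (Hmap N (f, t))
  intro x
  show Θ N f t.1 x.1 = Gf N f t.1 x.1
  rw [Θ, if_neg (not_le.2 ht')]

end EntropyHomotopy

/-- For every real `a ≥ 0`, there is a homotopy `H` on `C(I)` with `H_0 = id`, such that
`h_top(H_t(f)) ≥ a` for all `t ∈ (0,1]` and all `f`, and `H_1` is a constant map. -/
theorem exists_homotopy_entropy_ge (a : ℝ) (ha : 0 ≤ a) :
    ∃ H : C(I, I) × I → C(I, I), Continuous H ∧
      (∀ f : C(I, I), H (f, 0) = f) ∧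
      (∀ (f : C(I, I)) (t : I), 0 < t → (a : EReal) ≤ htop (H (f, t))) ∧
      (∃ c : C(I, I), ∀ f : C(I, I), H (f, 1) = c) := by
  set N : ℕ := max 3 ⌈Real.exp a⌉₊ with hNdef
  have hN0 : 0 < N := lt_of_lt_of_le (by norm_num) (le_max_left _ _)
  have hlogN : a ≤ Real.log N := by
    have h1 : Real.exp a ≤ (N:ℝ) := by
      calc Real.exp a ≤ (⌈Real.exp a⌉₊ : ℝ) := Nat.le_ceil _
        _ ≤ (N:ℝ) := by exact_mod_cast le_max_right 3 ⌈Real.exp a⌉₊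
    calc a = Real.log (Real.exp a) := (Real.log_exp a).symm
      _ ≤ Real.log N := Real.log_le_log (Real.exp_pos a) h1
  refine ⟨EntropyHomotopy.Hmap N, EntropyHomotopy.Hmap_continuous N,
    fun f => EntropyHomotopy.Hmap_zero N f, ?_,
    ⟨EntropyHomotopy.Hmap N (ContinuousMap.id I, 1),
      fun f => EntropyHomotopy.Hmap_one N f (ContinuousMap.id I)⟩⟩
  intro f t ht
  have h2 := EntropyHomotopy.Hmap_entropy hN0 f t ht
  refine le_trans ?_ h2
  exact_mod_cast EReal.coe_le_coe_iff.2 hlogN
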